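/- A groupoid can be recovered up to equivalence from its presheaf category: if 𝒢 and ℋ are (small) groupoids such that the presheaf categories 𝒢ᵒᵖ ⥤ Type and ℋᵒᵖ ⥤ Type are equivalent, then the groupoids 𝒢 and ℋ are equivalent. -/

import Mathlib

open CategoryTheory CategoryTheory.Limits Opposite

universe u

section Aux

variable {H : Type u} [Groupoid.{u} H]

/-- In a groupoid, idempotents are identities. -/
lemma idem_eq_id {h : H} (f : h ⟶ h) (hf : f ≫ f = f) : f = 𝟙 h := by
  have : f ≫ f = f ≫ 𝟙 h := by simpa using hf
  exact (cancel_epi f).mp this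

/-- If `coyoneda.obj (op Q)` preserves the canonical colimit presentation of `Q`,
then `Q` is representable (over a groupoid). -/
lemma repr_of_tiny (Q : Hᵒᵖ ⥤ Type u)
    [PreservesColimit (Presheaf.functorToRepresentables Q) (coyoneda.obj (op Q))] :
    ∃ h : H, Nonempty (Q ≅ yoneda.obj h) := by
  have hc : IsColimit ((coyoneda.obj (op Q)).mapCocone (Presheaf.coconeOfRepresentable Q)) :=
    isColimitOfPreserves _ (Presheaf.colimitOfRepresentable Q)
  obtain ⟨j, s, hs⟩ := Types.jointly_surjective _ hc (𝟙 Q)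
  let h : H := j.unop.1.unop
  let s' : Q ⟶ yoneda.obj h := s ≫ (uliftYonedaIsoYoneda.{u}.app h).hom
  let r : yoneda.obj h ⟶ Q := (uliftYonedaIsoYoneda.{u}.app h).inv ≫ (Presheaf.coconeOfRepresentable Q).ι.app j
  have hsr : s' ≫ r = 𝟙 Q := by
    simp only [s', r, Category.assoc, Iso.hom_inv_id_app_assoc]
    exact hs
  have hidem : (r ≫ s') ≫ (r ≫ s') = r ≫ s' := by
    rw [Category.assoc, ← Category.assoc s' r, hsr, Category.id_comp]
  let f : h ⟶ h := Yoneda.fullyFaithful.preimage (r ≫ s')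
  have hmapf : yoneda.map f = r ≫ s' := Yoneda.fullyFaithful.map_preimage _
  have hff : f ≫ f = f := by
    apply Yoneda.fullyFaithful.map_injective
    rw [Functor.map_comp, hmapf]
    simpa using hidem
  have hrs : r ≫ s' = 𝟙 (yoneda.obj h) := by
    rw [← hmapf, idem_eq_id f hff, yoneda.map_id]
  exact ⟨h, ⟨⟨s', r, hsr, hrs⟩⟩⟩

end Aux

section Transfer

variable {G H : Type u} [Groupoid.{u} G] [Groupoid.{u} H]
  (e : (Gᵒᵖ ⥤ Type u) ≌ (Hᵒᵖ ⥤ Type u))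

/-- `Hom(e.functor.obj A, -) ≅ e.inverse ⋙ Hom(A, -)`. -/
noncomputable def coyonedaIso (A : Gᵒᵖ ⥤ Type u) :
    coyoneda.obj (op (e.functor.obj A)) ≅ e.inverse ⋙ coyoneda.obj (op A) :=
  NatIso.ofComponents (fun X => Equiv.toIso (e.toAdjunction.homEquiv A X))
    (fun {X Y} g => by
      ext t
      exact e.toAdjunction.homEquiv_naturality_right t g)

lemma image_representable (g : G) :
    ∃ h : H, Nonempty (e.functor.obj (yoneda.obj g) ≅ yoneda.obj h) := by
  set Q := e.functor.obj (yoneda.obj g) with hQ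
  have : PreservesColimit (Presheaf.functorToRepresentables Q)
      (e.inverse ⋙ coyoneda.obj (op (yoneda.obj g))) := by
    infer_instance
  have : PreservesColimit (Presheaf.functorToRepresentables Q) (coyoneda.obj (op Q)) :=
    preservesColimit_of_natIso _ (coyonedaIso e (yoneda.obj g)).symm
  exact repr_of_tiny Q

end Transfer

theorem groupoid_equiv_of_presheaf_equiv {G H : Type u} [Groupoid.{u} G] [Groupoid.{u} H]
    (e : (Gᵒᵖ ⥤ Type u) ≌ (Hᵒᵖ ⥤ Type u)) : Nonempty (G ≌ H) := by
  classical
  -- choose, for each g, a representing object of `e.functor.obj (yoneda.obj g)`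
  choose φ hφ using fun g : G => image_representable e g
  have ι : ∀ g : G, e.functor.obj (yoneda.obj g) ≅ yoneda.obj (φ g) := fun g =>
    (hφ g).some
  -- the functor G ⥤ H
  let K : G ⥤ (Hᵒᵖ ⥤ Type u) := yoneda ⋙ e.functor
  let Φ : G ⥤ H :=
    { obj := φ
      map := fun {g g'} f =>
        Yoneda.fullyFaithful.preimage ((ι g).inv ≫ K.map f ≫ (ι g').hom)
      map_id := fun g => by
        apply Yoneda.fullyFaithful.map_injective
        simp [K]
      map_comp := fun {g g' g''} f f' => by
        apply Yoneda.fullyFaithful.map_injective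
        simp [K] }
  have hΦy : Φ ⋙ yoneda ≅ K :=
    NatIso.ofComponents (fun g => (ι g).symm) (fun {g g'} f => by
      dsimp [Φ]
      rw [Functor.FullyFaithful.map_preimage]
      simp)
  have : (Φ ⋙ yoneda).Faithful := Functor.Faithful.of_iso hΦy.symm
  have : Φ.Faithful := Functor.Faithful.of_comp_iso hΦy
  have : Φ.Full := Functor.Full.of_comp_faithful_iso hΦy
  have : Φ.EssSurj := by
    constructor
    intro h
    obtain ⟨g, ⟨α⟩⟩ := image_representable e.symm h
    -- α : e.inverse.obj (yoneda.obj h) ≅ yoneda.obj g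
    have β : yoneda.obj (φ g) ≅ yoneda.obj h :=
      (ι g).symm ≪≫ e.functor.mapIso α.symm ≪≫ e.counitIso.app (yoneda.obj h)
    exact ⟨g, ⟨Yoneda.fullyFaithful.preimageIso β⟩⟩
  have : Φ.IsEquivalence := { }
  exact ⟨Φ.asEquivalence⟩
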